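/- If γ and γ' are two couplings of μ ∈ P(X) and ν ∈ P(Y) such that γ, γ', and (γ + γ')/2 are each concentrated on the graph of a measurable map from X to Y (pushing μ to ν), then γ = γ'. -/

import Mathlib

open MeasureTheory

lemma inter_full_aux {α : Type*} [MeasurableSpace α] (γ : Measure α) (S M : Set α)
    (hγu : γ Set.univ = 1) (hS : γ S = 1) (hM : MeasurableSet M) :
    γ (M ∩ S) = γ M := by
  have h1 : γ (S ∩ M) + γ (S \ M) = γ S := measure_inter_add_diff S hM
  have h2 : γ (S \ M) ≤ γ Mᶜ := measure_mono (Set.diff_subset_compl S M)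
  have h3 : γ M + γ Mᶜ = 1 := by
    rw [measure_add_measure_compl hM, hγu]
  have hc : γ Mᶜ ≠ ⊤ := by
    intro h
    rw [h, add_top] at h3
    exact ENNReal.top_ne_one h3
  have hle : γ M + γ Mᶜ ≤ γ (S ∩ M) + γ Mᶜ := by
    calc γ M + γ Mᶜ = 1 := h3
    _ = γ (S ∩ M) + γ (S \ M) := by rw [h1, hS]
    _ ≤ γ (S ∩ M) + γ Mᶜ := add_le_add_right h2 _
  have h4 : γ M ≤ γ (S ∩ M) := (ENNReal.add_le_add_iff_right hc).mp hle
  rw [Set.inter_comm]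
  exact le_antisymm (measure_mono Set.inter_subset_right) h4

lemma graph_coupling_aux {X Y : Type*} [MeasurableSpace X] [MeasurableSpace Y]
    (γ : Measure (X × Y)) (μ : Measure X) (T : X → Y) (hT : Measurable T)
    (h1 : γ.map Prod.fst = μ) (hu : γ Set.univ = 1)
    (hS : γ {p : X × Y | p.2 = T p.1} = 1) :
    γ = μ.map (fun x => (x, T x)) := by
  have hf : Measurable (fun x => (x, T x)) := measurable_id.prodMk hT
  ext E hE
  rw [Measure.map_apply hf hE, ← h1,
    Measure.map_apply measurable_fst (hf hE)]
  set S : Set (X × Y) := {p : X × Y | p.2 = T p.1}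
  set M : Set (X × Y) := Prod.fst ⁻¹' ((fun x => (x, T x)) ⁻¹' E)
  have hMmeas : MeasurableSet M := measurable_fst (hf hE)
  have hkey : E ∩ S = M ∩ S := by
    ext ⟨x, y⟩
    simp only [S, M, Set.mem_inter_iff, Set.mem_setOf_eq, Set.mem_preimage]
    constructor
    · rintro ⟨hE', rfl⟩; exact ⟨hE', rfl⟩
    · rintro ⟨hE', rfl⟩; exact ⟨hE', rfl⟩
  calc γ E = γ (E ∩ S) := (inter_full_aux γ S E hu hS hE).symm
    _ = γ (M ∩ S) := by rw [hkey]
    _ = γ M := inter_full_aux γ S M hu hS hMmeas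

/-- If two couplings `γ, γ'` of `μ` and `ν`, as well as their midpoint `(γ + γ')/2`, are
each concentrated on the graph of a measurable map pushing `μ` to `ν`, then `γ = γ'`. -/
theorem stmt7 {X Y : Type*}
    [MeasurableSpace X] [MeasurableSpace Y]
    (μ : Measure X) (ν : Measure Y) [IsProbabilityMeasure μ] [IsProbabilityMeasure ν]
    (γ γ' : Measure (X × Y))
    (hγ₁ : γ.map Prod.fst = μ) (hγ₂ : γ.map Prod.snd = ν)
    (hγ'₁ : γ'.map Prod.fst = μ) (hγ'₂ : γ'.map Prod.snd = ν)
    (hγ : ∃ T : X → Y, Measurable T ∧ μ.map T = ν ∧ γ {p | p.2 = T p.1} = 1)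
    (hγ' : ∃ T : X → Y, Measurable T ∧ μ.map T = ν ∧ γ' {p | p.2 = T p.1} = 1)
    (hmid : ∃ T : X → Y, Measurable T ∧ μ.map T = ν ∧
      ((2 : ENNReal)⁻¹ • (γ + γ')) {p | p.2 = T p.1} = 1) :
    γ = γ' := by
  obtain ⟨T, hT, hTν, hmid⟩ := hmid
  have huγ : γ Set.univ = 1 := by
    have := congrArg (fun m : Measure X => m Set.univ) hγ₁
    simpa [Measure.map_apply measurable_fst MeasurableSet.univ] using this
  have huγ' : γ' Set.univ = 1 := by
    have := congrArg (fun m : Measure X => m Set.univ) hγ'₁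
    simpa [Measure.map_apply measurable_fst MeasurableSet.univ] using this
  set S : Set (X × Y) := {p : X × Y | p.2 = T p.1}
  have hmid' : γ S + γ' S = 2 := by
    have h := hmid
    rw [Measure.smul_apply, Measure.add_apply, smul_eq_mul] at h
    have h2 : (2 : ENNReal) ≠ 0 := by norm_num
    have h2t : (2 : ENNReal) ≠ ⊤ := by norm_num
    calc γ S + γ' S = 2 * (2⁻¹ * (γ S + γ' S)) := by
          rw [← mul_assoc, ENNReal.mul_inv_cancel h2 h2t, one_mul]
      _ = 2 * 1 := by rw [h]
      _ = 2 := mul_one 2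
  have hle1 : γ S ≤ 1 := huγ ▸ measure_mono (Set.subset_univ S)
  have hle2 : γ' S ≤ 1 := huγ' ▸ measure_mono (Set.subset_univ S)
  have hγS : γ S = 1 := by
    refine le_antisymm hle1 ?_
    have : (1 : ENNReal) + 1 ≤ γ S + 1 := by
      calc (1 : ENNReal) + 1 = 2 := one_add_one_eq_two
        _ = γ S + γ' S := hmid'.symm
        _ ≤ γ S + 1 := add_le_add_right hle2 _
    exact (ENNReal.add_le_add_iff_right ENNReal.one_ne_top).mp this
  have hγ'S : γ' S = 1 := by
    refine le_antisymm hle2 ?_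
    have : (1 : ENNReal) + 1 ≤ γ' S + 1 := by
      calc (1 : ENNReal) + 1 = 2 := one_add_one_eq_two
        _ = γ S + γ' S := hmid'.symm
        _ = γ' S + γ S := add_comm _ _
        _ ≤ γ' S + 1 := add_le_add_right hle1 _
    exact (ENNReal.add_le_add_iff_right ENNReal.one_ne_top).mp this
  rw [graph_coupling_aux γ μ T hT hγ₁ huγ hγS,
    graph_coupling_aux γ' μ T hT hγ'₁ huγ' hγ'S]
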